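/- The dual function J_f(Λ̃,Γ̃) = −(c/2)·Σ_{h,j,k,l} log(λ̃_{hj} + γ̃_{kl}) + (1/2)Σ_{h,j} λ̃_{hj} c'_{hj} + (1/2)Σ_{k,l} γ̃_{kl} c''_{kl}, with all c'_{hj}, c''_{kl} > 0 and c > 0, is coercive on the set C = {(Λ̃,Γ̃) : λ̃_{hj} ≥ 0, γ̃_{kl} ≥ 0, λ̃_{hj}+γ̃_{kl} > 0 for all indices}: along any sequence in C where some λ̃_{hj} → ∞ or some γ̃_{kl} → ∞, or where some λ̃_{hj}+γ̃_{kl} → 0, the value of J_f tends to +∞. -/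

import Mathlib

open Filter

/-- The dual function J_f. Index `a` ranges over pairs (h,j) ∈ I₁×I₁ and `b`
over pairs (k,l) ∈ I₂×I₂. -/
noncomputable def Jf {A B : Type*} [Fintype A] [Fintype B]
    (c : ℝ) (c' : A → ℝ) (c'' : B → ℝ) (lam : A → ℝ) (gam : B → ℝ) : ℝ :=
  -(c / 2) * ∑ a : A, ∑ b : B, Real.log (lam a + gam b) +
    (1 / 2) * ∑ a : A, lam a * c' a + (1 / 2) * ∑ b : B, gam b * c'' b

/-- For positive `m` and `c`, `m*s - (c/2) * log s` is bounded below on `(0,∞)`. -/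
lemma log_lin_lower {c m : ℝ} (hc : 0 < c) (hm : 0 < m) {s : ℝ} (hs : 0 < s) :
    c / 2 + (c / 2) * Real.log (2 * m / c) ≤ m * s - (c / 2) * Real.log s := by
  have ht : (0:ℝ) < 2 * m / c := by positivity
  have h1 : Real.log (2 * m / c * s) ≤ 2 * m / c * s - 1 :=
    Real.log_le_sub_one_of_pos (by positivity)
  rw [Real.log_mul (ne_of_gt ht) (ne_of_gt hs)] at h1
  have h2 : (c / 2) * (2 * m / c * s) = m * s := by field_simp
  nlinarith [mul_le_mul_of_nonneg_left h1 (le_of_lt (half_pos hc))]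

theorem Jf_coercive {A B : Type*} [Fintype A] [Fintype B] [Nonempty A] [Nonempty B]
    (c : ℝ) (hc : 0 < c) (c' : A → ℝ) (hc' : ∀ a, 0 < c' a)
    (c'' : B → ℝ) (hc'' : ∀ b, 0 < c'' b)
    (lam : ℕ → A → ℝ) (gam : ℕ → B → ℝ)
    (hmem : ∀ n, (∀ a, 0 ≤ lam n a) ∧ (∀ b, 0 ≤ gam n b) ∧
      (∀ a b, 0 < lam n a + gam n b))
    (hblow : (∃ a, Tendsto (fun n => lam n a) atTop atTop) ∨
      (∃ b, Tendsto (fun n => gam n b) atTop atTop) ∨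
      (∃ a b, Tendsto (fun n => lam n a + gam n b) atTop (nhds 0))) :
    Tendsto (fun n => Jf c c' c'' (lam n) (gam n)) atTop atTop := by
  classical
  have hcA : (0:ℝ) < (Fintype.card A : ℝ) := by exact_mod_cast Fintype.card_pos
  have hcB : (0:ℝ) < (Fintype.card B : ℝ) := by exact_mod_cast Fintype.card_pos
  set cA := (Fintype.card A : ℝ) with hcAdef
  set cB := (Fintype.card B : ℝ) with hcBdef
  set F : A → B → ℕ → ℝ := fun a b n =>
    -(c / 2) * Real.log (lam n a + gam n b) + lam n a * c' a / (2 * cB)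
      + gam n b * c'' b / (2 * cA) with hFdef
  -- Jf equals the sum of the F's
  have hJ : ∀ n, Jf c c' c'' (lam n) (gam n) = ∑ p : A × B, F p.1 p.2 n := by
    intro n
    have e1 : ∑ a : A, ∑ b : B, (-(c / 2) * Real.log (lam n a + gam n b))
        = -(c / 2) * ∑ a : A, ∑ b : B, Real.log (lam n a + gam n b) := by
      simp [Finset.mul_sum]
    have e2 : ∑ a : A, ∑ _b : B, lam n a * c' a / (2 * cB)
        = (1 / 2) * ∑ a : A, lam n a * c' a := by
      rw [Finset.mul_sum]
      refine Finset.sum_congr rfl fun a _ => ?_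
      rw [Finset.sum_const, Finset.card_univ, nsmul_eq_mul, ← hcBdef]
      field_simp
    have e3 : ∑ a : A, ∑ b : B, gam n b * c'' b / (2 * cA)
        = (1 / 2) * ∑ b : B, gam n b * c'' b := by
      rw [Finset.sum_comm, Finset.mul_sum]
      refine Finset.sum_congr rfl fun b _ => ?_
      rw [Finset.sum_const, Finset.card_univ, nsmul_eq_mul, ← hcAdef]
      field_simp
    rw [Fintype.sum_prod_type]
    simp only [hFdef, Finset.sum_add_distrib, Jf, e1, e2, e3]
  -- each F is bounded below
  set m : A → B → ℝ := fun a b => min (c' a / (2 * cB)) (c'' b / (2 * cA)) with hmdef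
  have hmpos : ∀ a b, 0 < m a b := fun a b =>
    lt_min (div_pos (hc' a) (by linarith)) (div_pos (hc'' b) (by linarith))
  set K : A → B → ℝ := fun a b => c / 2 + (c / 2) * Real.log (2 * m a b / c) with hKdef
  have hK : ∀ a b n, K a b ≤ F a b n := by
    intro a b n
    have hs := (hmem n).2.2 a b
    have h1 := log_lin_lower hc (hmpos a b) hs
    have hl := (hmem n).1 a
    have hg := (hmem n).2.1 b
    have e1 : m a b ≤ c' a / (2 * cB) := min_le_left _ _
    have e2 : m a b ≤ c'' b / (2 * cA) := min_le_right _ _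
    have t1 : m a b * lam n a ≤ (c' a / (2 * cB)) * lam n a :=
      mul_le_mul_of_nonneg_right e1 hl
    have t2 : m a b * gam n b ≤ (c'' b / (2 * cA)) * gam n b :=
      mul_le_mul_of_nonneg_right e2 hg
    have h3 : lam n a * c' a / (2 * cB) = c' a / (2 * cB) * lam n a := by ring
    have h4 : gam n b * c'' b / (2 * cA) = c'' b / (2 * cA) * gam n b := by ring
    simp only [hFdef, hKdef]
    rw [h3, h4]
    nlinarith
  -- in each case some F diverges
  have key : ∃ a b, Tendsto (fun n => F a b n) atTop atTop := by
    rcases hblow with ⟨a, ha⟩ | ⟨b, hb⟩ | ⟨a, b, hab⟩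
    · obtain ⟨b⟩ := (inferInstance : Nonempty B)
      refine ⟨a, b, ?_⟩
      set α := c' a / (2 * cB) with hα
      set β := c'' b / (2 * cA) with hβ
      have hαpos : 0 < α := div_pos (hc' a) (by linarith)
      have hβpos : 0 < β := div_pos (hc'' b) (by linarith)
      set m' := min (α / 2) β with hm'
      have hm'pos : 0 < m' := lt_min (half_pos hαpos) hβpos
      have lower : ∀ n, (c / 2 + (c / 2) * Real.log (2 * m' / c)) + (α / 2) * lam n a
          ≤ F a b n := by
        intro n
        have hs := (hmem n).2.2 a b
        have h1 := log_lin_lower hc hm'pos hs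
        have hl := (hmem n).1 a
        have hg := (hmem n).2.1 b
        have e1 : m' ≤ α / 2 := min_le_left _ _
        have e2 : m' ≤ β := min_le_right _ _
        have h2 : m' * (lam n a + gam n b) + (α / 2) * lam n a
            ≤ lam n a * α + gam n b * β := by nlinarith
        have h3 : lam n a * c' a / (2 * cB) = lam n a * α := by
          rw [hα]; ring
        have h4 : gam n b * c'' b / (2 * cA) = gam n b * β := by
          rw [hβ]; ring
        simp only [hFdef, h3, h4]
        linarith
      exact tendsto_atTop_mono lower
        (tendsto_atTop_add_const_left _ _ (ha.const_mul_atTop (half_pos hαpos)))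
    · obtain ⟨a⟩ := (inferInstance : Nonempty A)
      refine ⟨a, b, ?_⟩
      set α := c' a / (2 * cB) with hα
      set β := c'' b / (2 * cA) with hβ
      have hαpos : 0 < α := div_pos (hc' a) (by linarith)
      have hβpos : 0 < β := div_pos (hc'' b) (by linarith)
      set m' := min α (β / 2) with hm'
      have hm'pos : 0 < m' := lt_min hαpos (half_pos hβpos)
      have lower : ∀ n, (c / 2 + (c / 2) * Real.log (2 * m' / c)) + (β / 2) * gam n b
          ≤ F a b n := by
        intro n
        have hs := (hmem n).2.2 a b
        have h1 := log_lin_lower hc hm'pos hs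
        have hl := (hmem n).1 a
        have hg := (hmem n).2.1 b
        have e1 : m' ≤ α := min_le_left _ _
        have e2 : m' ≤ β / 2 := min_le_right _ _
        have h2 : m' * (lam n a + gam n b) + (β / 2) * gam n b
            ≤ lam n a * α + gam n b * β := by nlinarith
        have h3 : lam n a * c' a / (2 * cB) = lam n a * α := by
          rw [hα]; ring
        have h4 : gam n b * c'' b / (2 * cA) = gam n b * β := by
          rw [hβ]; ring
        simp only [hFdef, h3, h4]
        linarith
      exact tendsto_atTop_mono lower
        (tendsto_atTop_add_const_left _ _ (hb.const_mul_atTop (half_pos hβpos)))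
    · refine ⟨a, b, ?_⟩
      have hlog : Tendsto (fun n => Real.log (lam n a + gam n b)) atTop atBot :=
        Real.tendsto_log_nhdsGT_zero.comp
          (tendsto_nhdsWithin_of_tendsto_nhds_of_eventually_within _ hab
            (Eventually.of_forall fun n => (hmem n).2.2 a b))
      have h1 : Tendsto (fun n => -(c / 2) * Real.log (lam n a + gam n b)) atTop atTop := by
        have h0 : Tendsto (fun n => (c / 2) * Real.log (lam n a + gam n b)) atTop atBot :=
          hlog.const_mul_atBot (by positivity)
        have := tendsto_neg_atBot_atTop.comp h0
        refine this.congr fun n => ?_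
        simp only [Function.comp]
        ring
      have lower : ∀ n, -(c / 2) * Real.log (lam n a + gam n b) ≤ F a b n := by
        intro n
        have hl := (hmem n).1 a
        have hg := (hmem n).2.1 b
        have t1 : 0 ≤ lam n a * c' a / (2 * cB) :=
          div_nonneg (mul_nonneg hl (hc' a).le) (by linarith)
        have t2 : 0 ≤ gam n b * c'' b / (2 * cA) :=
          div_nonneg (mul_nonneg hg (hc'' b).le) (by linarith)
        simp only [hFdef]
        linarith
      exact tendsto_atTop_mono lower h1
  obtain ⟨a₀, b₀, hF0⟩ := key
  have lower : ∀ n,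
      (∑ p ∈ Finset.univ.erase (a₀, b₀), K p.1 p.2) + F a₀ b₀ n
        ≤ Jf c c' c'' (lam n) (gam n) := by
    intro n
    rw [hJ n, ← Finset.add_sum_erase _ _ (Finset.mem_univ (a₀, b₀))]
    have hsum : ∑ p ∈ Finset.univ.erase (a₀, b₀), K p.1 p.2
        ≤ ∑ p ∈ Finset.univ.erase (a₀, b₀), F p.1 p.2 n :=
      Finset.sum_le_sum fun p _ => hK p.1 p.2 n
    linarith
  exact tendsto_atTop_mono lower (tendsto_atTop_add_const_left _ _ hF0)
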